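/- Let d >= 1 and j >= 1, and expand ((1/2) PROD_{i=1}^d (1-t_i) + (1/2) PROD_{i=1}^d (1+t_i))^j = SUM_rho m_rho S_rho(t_1,...,t_d) in the Schur basis. If m_rho != 0, then rho_1 <= j (the Young diagram of rho has at most j columns, i.e., rho = (j^{s_1}, (j-1)^{s_2}, ..., 1^{s_j}) for some nonnegative integers s_1,...,s_j) and |rho| is even. -/

import Mathlib

/-- `lam : ℕ → ℕ` encodes a partition: weakly decreasing with finitely many nonzero parts. -/
def IsPartitionFun (lam : ℕ → ℕ) : Prop :=
  Antitone lam ∧ ∃ N : ℕ, ∀ i, N ≤ i → lam i = 0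

/-- `lam` encodes a partition with at most `d` (nonzero) parts. -/
def IsPartitionLe (d : ℕ) (lam : ℕ → ℕ) : Prop :=
  Antitone lam ∧ ∀ i, d ≤ i → lam i = 0

/-- The Schur function `S_lam(t_1, …, t_d)` as a multivariate formal power series: the
coefficient of a monomial is the number of semistandard Young tableaux of shape `lam` with
entries in `{0, …, d-1}` and the given content (entries weakly increase along rows and
strictly increase down columns). -/
noncomputable def schurFun (d : ℕ) (lam : ℕ → ℕ) : MvPowerSeries (Fin d) ℚ :=
  fun m => (Nat.card {T : ℕ → ℕ → ℕ //
    (∀ i j j', j ≤ j' → j' < lam i → T i j ≤ T i j') ∧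
    (∀ i i' j, i < i' → j < lam i' → T i j < T i' j) ∧
    (∀ i j, j < lam i → T i j < d) ∧
    (∀ i j, ¬ j < lam i → T i j = 0) ∧
    (∀ v : Fin d, Nat.card {c : ℕ × ℕ // c.2 < lam c.1 ∧ T c.1 c.2 = (v : ℕ)} = m v)} : ℚ)

/-- `g = ∑_λ c_λ S_λ(t_1,…,t_d)`, the sum running over partitions `λ` with at most `d`
parts; since the Schur functions are linearly independent, such an expansion of a symmetric
power series is unique. -/
def SchurExpansion (d : ℕ) (g : MvPowerSeries (Fin d) ℚ) (c : (ℕ → ℕ) → ℚ) : Prop :=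
  ∀ m : Fin d →₀ ℕ, MvPowerSeries.coeff (R := ℚ) m g =
    ∑ᶠ lam ∈ {lam : ℕ → ℕ | IsPartitionLe d lam},
      c lam * MvPowerSeries.coeff (R := ℚ) m (schurFun d lam)

open Finset MvPowerSeries Finsupp

namespace SchurAux


variable {d : ℕ}

/-- total degree of a monomial -/
def sdeg (m : Fin d →₀ ℕ) : ℕ := ∑ v, m v

lemma sdeg_add (p q : Fin d →₀ ℕ) : sdeg (p + q) = sdeg p + sdeg q := by
  simp [sdeg, Finsupp.add_apply, Finset.sum_add_distrib]

lemma sdeg_zero : sdeg (0 : Fin d →₀ ℕ) = 0 := by simp [sdeg]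

lemma sdeg_single (i : Fin d) : sdeg (Finsupp.single i 1) = 1 := by
  simp [sdeg, Finsupp.single_apply]

/-- pair relation under t ↦ -t -/
def PairP (f g : MvPowerSeries (Fin d) ℚ) : Prop :=
  ∀ m : Fin d →₀ ℕ, coeff (R := ℚ) m f = (-1 : ℚ) ^ (sdeg m) * coeff (R := ℚ) m g

lemma PairP.symm {f g : MvPowerSeries (Fin d) ℚ} (h : PairP f g) : PairP g f := by
  intro m
  rw [h m, ← mul_assoc, ← pow_add]
  rcases Nat.even_or_odd (sdeg m) with he | ho
  · simp [(he.add he).neg_one_pow]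
  · simp [(ho.add_odd ho).neg_one_pow]

lemma PairP.mul {f g f' g' : MvPowerSeries (Fin d) ℚ} (h : PairP f g) (h' : PairP f' g') :
    PairP (f * f') (g * g') := by
  classical
  intro m
  rw [coeff_mul, coeff_mul, Finset.mul_sum]
  refine Finset.sum_congr rfl fun p hp => ?_
  have hpq : p.1 + p.2 = m := Finset.HasAntidiagonal.mem_antidiagonal.mp hp
  rw [h p.1, h' p.2, ← hpq, sdeg_add, pow_add]
  ring

lemma PairP.add {f g f' g' : MvPowerSeries (Fin d) ℚ} (h : PairP f g) (h' : PairP f' g') :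
    PairP (f + f') (g + g') := by
  intro m
  rw [map_add, map_add, h m, h' m, mul_add]

lemma PairP.one : PairP (1 : MvPowerSeries (Fin d) ℚ) 1 := by
  classical
  intro m
  rw [coeff_one]
  split_ifs with h
  · subst h; simp [sdeg_zero]
  · simp

lemma PairP.C_mul {f g : MvPowerSeries (Fin d) ℚ} (a : ℚ) (h : PairP f g) :
    PairP (C (σ := Fin d) (R := ℚ) a * f) (C (σ := Fin d) (R := ℚ) a * g) := by
  intro m
  rw [coeff_C_mul, coeff_C_mul, h m]
  ring

lemma PairP.oneSubX (i : Fin d) : PairP (1 - X i : MvPowerSeries (Fin d) ℚ) (1 + X i) := by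
  classical
  intro m
  rw [map_sub, map_add, coeff_one, coeff_X]
  split_ifs with h0 h1 h1
  · exfalso; rw [h0] at h1; simp [eq_comm, Finsupp.single_eq_zero] at h1
  · subst h0; simp [sdeg_zero]
  · subst h1; simp [sdeg_single]
  · simp

lemma PairP.prod (s : Finset (Fin d)) :
    PairP (∏ i ∈ s, (1 - X i) : MvPowerSeries (Fin d) ℚ) (∏ i ∈ s, (1 + X i)) := by
  classical
  induction s using Finset.induction_on with
  | empty => simpa using PairP.one
  | insert _ _ hi ih =>
      rw [Finset.prod_insert hi, Finset.prod_insert hi]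
      exact (PairP.oneSubX _).mul ih

lemma PairP.pow {f g : MvPowerSeries (Fin d) ℚ} (h : PairP f g) (n : ℕ) :
    PairP (f ^ n) (g ^ n) := by
  induction n with
  | zero => simpa using PairP.one
  | succ n ih => rw [pow_succ, pow_succ]; exact ih.mul h




/-- variable-degree bound -/
def VB (b : Fin d → ℕ) (f : MvPowerSeries (Fin d) ℚ) : Prop :=
  ∀ m : Fin d →₀ ℕ, coeff (R := ℚ) m f ≠ 0 → ∀ v, m v ≤ b v

lemma VB.mul {b b' : Fin d → ℕ} {f g : MvPowerSeries (Fin d) ℚ} (h : VB b f) (h' : VB b' g) :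
    VB (fun v => b v + b' v) (f * g) := by
  classical
  intro m hm v
  rw [coeff_mul] at hm
  obtain ⟨p, hp, hne⟩ := Finset.exists_ne_zero_of_sum_ne_zero hm
  have hpq : p.1 + p.2 = m := Finset.HasAntidiagonal.mem_antidiagonal.mp hp
  have h1 := h p.1 (left_ne_zero_of_mul hne) v
  have h2 := h' p.2 (right_ne_zero_of_mul hne) v
  have : m v = p.1 v + p.2 v := by rw [← hpq]; rfl
  show m v ≤ b v + b' v
  omega

lemma VB.add {b : Fin d → ℕ} {f g : MvPowerSeries (Fin d) ℚ} (h : VB b f) (h' : VB b g) :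
    VB b (f + g) := by
  intro m hm v
  rw [map_add] at hm
  rcases (by by_contra hx; push_neg at hx; rw [hx.1, hx.2, add_zero] at hm; exact hm rfl :
      coeff (R := ℚ) m f ≠ 0 ∨ coeff (R := ℚ) m g ≠ 0) with hf | hg
  · exact h m hf v
  · exact h' m hg v

lemma VB.C_mul {b : Fin d → ℕ} {f : MvPowerSeries (Fin d) ℚ} (a : ℚ) (h : VB b f) :
    VB b (C (σ := Fin d) (R := ℚ) a * f) := by
  intro m hm v
  rw [coeff_C_mul] at hm
  exact h m (right_ne_zero_of_mul hm) v

lemma VB.onePM (a : ℚ) (i : Fin d) : VB (fun v => if v = i then 1 else 0)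
    ((1 : MvPowerSeries (Fin d) ℚ) + C (σ := Fin d) (R := ℚ) a * X i) := by
  classical
  intro m hm v
  rw [map_add, coeff_one, coeff_C_mul, coeff_X] at hm
  split_ifs at hm with h0 h1 h1
  · subst h0; simp
  · subst h0; simp
  · subst h1; simp [Finsupp.single_apply]; split_ifs <;> omega
  · simp at hm

lemma oneSub (i : Fin d) : (1 - X i : MvPowerSeries (Fin d) ℚ) = 1 + C (σ := Fin d) (R := ℚ) (-1) * X i := by
  rw [map_neg, map_one]; ring

lemma oneAdd (i : Fin d) : (1 + X i : MvPowerSeries (Fin d) ℚ) = 1 + C (σ := Fin d) (R := ℚ) 1 * X i := by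
  rw [map_one, one_mul]

lemma VB.one : VB (fun _ => 0) (1 : MvPowerSeries (Fin d) ℚ) := by
  classical
  intro m hm v
  rw [coeff_one] at hm
  split_ifs at hm with h0
  · subst h0; simp
  · simp at hm

lemma VB.prodPM (a : ℚ) (s : Finset (Fin d)) :
    VB (fun v => if v ∈ s then 1 else 0)
      (∏ i ∈ s, ((1 : MvPowerSeries (Fin d) ℚ) + C (σ := Fin d) (R := ℚ) a * X i)) := by
  classical
  induction s using Finset.induction_on with
  | empty => simpa using VB.one
  | insert i s hi ih =>
      rw [Finset.prod_insert hi]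
      have := (VB.onePM a i).mul ih
      intro m hm v
      have := this m hm v
      by_cases h1 : v = i <;> by_cases h2 : v ∈ s <;>
        simp [h1, h2, hi, Finset.mem_insert] at this ⊢ <;> omega


noncomputable def gFun (d j : ℕ) : MvPowerSeries (Fin d) ℚ :=
  (C (σ := Fin d) (R := ℚ) (1/2) * ∏ i : Fin d, (1 - X i)
    + C (σ := Fin d) (R := ℚ) (1/2) * ∏ i : Fin d, (1 + X i)) ^ j

lemma VB.mono {b b' : Fin d → ℕ} {f : MvPowerSeries (Fin d) ℚ} (h : VB b f)
    (hb : ∀ v, b v ≤ b' v) : VB b' f :=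
  fun m hm v => (h m hm v).trans (hb v)

lemma gFun_vb (j : ℕ) : VB (fun _ => j) (gFun d j) := by
  have h1 : VB (fun _ => 1) (∏ i : Fin d, ((1:MvPowerSeries (Fin d) ℚ) - X i)) := by
    have := VB.prodPM (d := d) (-1) Finset.univ
    rw [Finset.prod_congr rfl (fun i _ => oneSub i)]
    exact this.mono (by simp)
  have h2 : VB (fun _ => 1) (∏ i : Fin d, ((1:MvPowerSeries (Fin d) ℚ) + X i)) := by
    have := VB.prodPM (d := d) 1 Finset.univ
    rw [Finset.prod_congr rfl (fun i _ => oneAdd i)]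
    exact this.mono (by simp)
  have hh : VB (fun _ => 1)
      (C (σ := Fin d) (R := ℚ) (1/2) * ∏ i : Fin d, (1 - X i)
        + C (σ := Fin d) (R := ℚ) (1/2) * ∏ i : Fin d, (1 + X i)) :=
    (h1.C_mul _).add (h2.C_mul _)
  unfold gFun
  induction j with
  | zero =>
      rw [pow_zero]
      exact VB.one.mono (by simp)
  | succ n ih =>
      rw [pow_succ]
      exact (ih.mul hh).mono (by simp)

lemma gFun_pair (j : ℕ) : PairP (gFun d j) (gFun d j) := by
  have hA := PairP.prod (d := d) Finset.univ
  have := ((hA.C_mul (1/2)).add (hA.symm.C_mul (1/2))).pow j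
  unfold gFun
  rwa [add_comm ((C (σ := Fin d) (R := ℚ)) (1 / 2) * ∏ i : Fin d, (1 + X i))] at this

lemma gFun_coeff_eq_zero_of_odd {j : ℕ} {m : Fin d →₀ ℕ} (h : ¬ Even (sdeg m)) :
    coeff (R := ℚ) m (gFun d j) = 0 := by
  have := gFun_pair (d := d) j m
  rw [(Nat.not_even_iff_odd.mp h).neg_one_pow] at this
  linarith

lemma gFun_coeff_eq_zero_of_large {j : ℕ} {m : Fin d →₀ ℕ} {v : Fin d} (h : j < m v) :
    coeff (R := ℚ) m (gFun d j) = 0 := by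
  by_contra hne
  have := gFun_vb j m hne v
  simp only [] at this
  omega


variable {d : ℕ}

noncomputable def mOf (d : ℕ) (lam : ℕ → ℕ) : Fin d →₀ ℕ :=
  Finsupp.equivFunOnFinite.symm (fun v => lam v)

@[simp] lemma mOf_apply (lam : ℕ → ℕ) (v : Fin d) : mOf d lam v = lam v := rfl

def cells (d : ℕ) (mu : ℕ → ℕ) : Finset (ℕ × ℕ) :=
  (Finset.range d ×ˢ Finset.range (mu 0 + 1)).filter (fun c => c.2 < mu c.1)

lemma row_lt_of_cell {mu : ℕ → ℕ} (hmu : IsPartitionLe d mu) {c : ℕ × ℕ}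
    (h : c.2 < mu c.1) : c.1 < d := by
  by_contra hx
  push_neg at hx
  rw [hmu.2 c.1 hx] at h
  omega

lemma mem_cells {mu : ℕ → ℕ} (hmu : IsPartitionLe d mu) {c : ℕ × ℕ} :
    c ∈ cells d mu ↔ c.2 < mu c.1 := by
  constructor
  · intro h; exact (Finset.mem_filter.mp h).2
  · intro h
    refine Finset.mem_filter.mpr ⟨Finset.mem_product.mpr ⟨?_, ?_⟩, h⟩
    · exact Finset.mem_range.mpr (row_lt_of_cell hmu h)
    · have := hmu.1 (Nat.zero_le c.1)
      exact Finset.mem_range.mpr (by omega)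

lemma card_filter_row {mu : ℕ → ℕ} (hmu : IsPartitionLe d mu) (P : ℕ → Prop) [DecidablePred P] :
    ((cells d mu).filter (fun c => P c.1)).card = ∑ i ∈ (Finset.range d).filter P, mu i := by
  classical
  rw [Finset.card_eq_sum_card_fiberwise (f := fun c => c.1)
    (t := (Finset.range d).filter P) ?_]
  · refine Finset.sum_congr rfl fun i hi => ?_
    obtain ⟨hid, hP⟩ := Finset.mem_filter.mp hi
    have e : (((cells d mu).filter fun c => P c.1).filter fun c => c.1 = i)
        = (Finset.range (mu i)).map ⟨fun j => (i, j), fun a b h => by simpa using h⟩ := by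
      ext c
      obtain ⟨a, b⟩ := c
      simp only [Finset.mem_filter, mem_cells hmu, Finset.mem_map, Finset.mem_range,
        Function.Embedding.coeFn_mk, Prod.mk.injEq]
      constructor
      · rintro ⟨⟨hc, hPc⟩, rfl⟩
        exact ⟨b, hc, rfl⟩
      · rintro ⟨x, hx, hx'⟩
        obtain ⟨rfl, rfl⟩ : i = a ∧ x = b := Prod.mk.inj hx'
        exact ⟨⟨hx, hP⟩, rfl⟩
    rw [e, Finset.card_map, Finset.card_range]
  · intro c hc
    obtain ⟨hc1, hPc⟩ := Finset.mem_filter.mp hc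
    exact Finset.mem_filter.mpr
      ⟨Finset.mem_range.mpr (row_lt_of_cell hmu ((mem_cells hmu).mp hc1)), hPc⟩

section Tableau
variable {mu lam : ℕ → ℕ} {T : ℕ → ℕ → ℕ}

lemma card_filter_val (hmu : IsPartitionLe d mu)
    (hT3 : ∀ i j, j < mu i → T i j < d)
    (hcnt : ∀ v : Fin d, Nat.card {c : ℕ × ℕ // c.2 < mu c.1 ∧ T c.1 c.2 = (v : ℕ)} = lam v)
    (P : ℕ → Prop) [DecidablePred P] :
    ((cells d mu).filter (fun c => P (T c.1 c.2))).card
      = ∑ v ∈ (Finset.range d).filter P, lam v := by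
  classical
  rw [Finset.card_eq_sum_card_fiberwise (f := fun c => T c.1 c.2)
    (t := (Finset.range d).filter P) ?_]
  · refine Finset.sum_congr rfl fun v hv => ?_
    obtain ⟨hvd, hPv⟩ := Finset.mem_filter.mp hv
    rw [Finset.mem_range] at hvd
    have e1 : (((cells d mu).filter fun c => P (T c.1 c.2)).filter fun c => T c.1 c.2 = v)
        = (cells d mu).filter (fun c => T c.1 c.2 = v) := by
      ext c
      simp only [Finset.mem_filter]
      constructor
      · rintro ⟨⟨h1, _⟩, h3⟩; exact ⟨h1, h3⟩
      · rintro ⟨h1, h2⟩; exact ⟨⟨h1, h2 ▸ hPv⟩, h2⟩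
    rw [e1, ← hcnt ⟨v, hvd⟩]
    rw [Nat.card_congr (Equiv.subtypeEquivRight
      (q := fun c : ℕ × ℕ => c ∈ (cells d mu).filter (fun c => T c.1 c.2 = v)) ?_)]
    · exact (Nat.card_eq_finsetCard _).symm
    · intro c
      simp [Finset.mem_filter, mem_cells hmu]
  · intro c hc
    obtain ⟨hc1, hc2⟩ := Finset.mem_filter.mp hc
    have hcell := (mem_cells hmu).mp hc1
    exact Finset.mem_filter.mpr ⟨Finset.mem_range.mpr (hT3 _ _ hcell), hc2⟩

lemma le_T (hmu : Antitone mu)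
    (hT2 : ∀ i i' j, i < i' → j < mu i' → T i j < T i' j) :
    ∀ i j, j < mu i → i ≤ T i j := by
  intro i
  induction i with
  | zero => intro j _; exact Nat.zero_le _
  | succ n ih =>
      intro j hj
      have hj' : j < mu n := lt_of_lt_of_le hj (hmu (Nat.le_succ n))
      have h1 := hT2 n (n + 1) j (Nat.lt_succ_self n) hj
      have h2 := ih j hj'
      omega

lemma dominance (hmu : IsPartitionLe d mu) (hlam : IsPartitionLe d lam)
    (hne : (MvPowerSeries.coeff (R := ℚ) (mOf d lam)) (schurFun d mu) ≠ 0) :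
    (∀ k, k ≤ d → ∑ v ∈ Finset.range k, lam v ≤ ∑ i ∈ Finset.range k, mu i) ∧
      ∑ i ∈ Finset.range d, mu i = ∑ v ∈ Finset.range d, lam v := by
  classical
  rw [MvPowerSeries.coeff_apply, schurFun] at hne
  have hnecard : Nat.card {T : ℕ → ℕ → ℕ //
      (∀ i j j', j ≤ j' → j' < mu i → T i j ≤ T i j') ∧
      (∀ i i' j, i < i' → j < mu i' → T i j < T i' j) ∧
      (∀ i j, j < mu i → T i j < d) ∧
      (∀ i j, ¬ j < mu i → T i j = 0) ∧
      (∀ v : Fin d, Nat.card {c : ℕ × ℕ // c.2 < mu c.1 ∧ T c.1 c.2 = (v : ℕ)}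
        = mOf d lam v)} ≠ 0 := by
    intro h
    rw [h] at hne
    simp at hne
  obtain ⟨⟨T, hT1, hT2, hT3, hT4, hcnt⟩⟩ := (Nat.card_ne_zero.mp hnecard).1
  have hcnt' : ∀ v : Fin d, Nat.card {c : ℕ × ℕ // c.2 < mu c.1 ∧ T c.1 c.2 = (v : ℕ)}
      = lam v := fun v => hcnt v
  constructor
  · intro k hk
    have h1 : ∑ v ∈ Finset.range k, lam v
        = ((cells d mu).filter (fun c => T c.1 c.2 < k)).card := by
      rw [card_filter_val hmu hT3 hcnt' (fun x => x < k)]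
      congr 1
      ext x
      simp only [Finset.mem_filter, Finset.mem_range]
      omega
    have h2 : ((cells d mu).filter (fun c => c.1 < k)).card = ∑ i ∈ Finset.range k, mu i := by
      rw [card_filter_row hmu (fun x => x < k)]
      congr 1
      ext x
      simp only [Finset.mem_filter, Finset.mem_range]
      omega
    rw [h1, ← h2]
    apply Finset.card_le_card
    intro c hcmem
    obtain ⟨hc1, hc2⟩ := Finset.mem_filter.mp hcmem
    have hcell := (mem_cells hmu).mp hc1
    have := le_T hmu.1 hT2 c.1 c.2 hcell
    exact Finset.mem_filter.mpr ⟨hc1, by omega⟩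
  · have htot1 : (cells d mu).card = ∑ i ∈ Finset.range d, mu i := by
      have := card_filter_row hmu (fun _ => True)
      simpa using this
    have htot2 : (cells d mu).card = ∑ v ∈ Finset.range d, lam v := by
      have := card_filter_val hmu hT3 hcnt' (fun _ => True)
      simpa using this
    omega

lemma tableau_unique (hlam : IsPartitionLe d lam)
    (hT2 : ∀ i i' j, i < i' → j < lam i' → T i j < T i' j)
    (hT3 : ∀ i j, j < lam i → T i j < d)
    (hT4 : ∀ i j, ¬ j < lam i → T i j = 0)
    (hcnt : ∀ v : Fin d, Nat.card {c : ℕ × ℕ // c.2 < lam c.1 ∧ T c.1 c.2 = (v : ℕ)}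
      = lam v) :
    T = fun i j => if j < lam i then i else 0 := by
  classical
  have key : ∀ k, ((cells d lam).filter (fun c => k ≤ c.1))
      = ((cells d lam).filter (fun c => k ≤ T c.1 c.2)) := by
    intro k
    apply Finset.eq_of_subset_of_card_le
    · intro c hcmem
      obtain ⟨hc1, hc2⟩ := Finset.mem_filter.mp hcmem
      have hcell := (mem_cells hlam).mp hc1
      have := le_T hlam.1 hT2 c.1 c.2 hcell
      exact Finset.mem_filter.mpr ⟨hc1, by omega⟩
    · rw [card_filter_row hlam (fun x => k ≤ x), card_filter_val hlam hT3 hcnt (fun x => k ≤ x)]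
  funext i j
  by_cases hcell : j < lam i
  · have hge := le_T hlam.1 hT2 i j hcell
    have hle : T i j ≤ i := by
      by_contra hgt
      push_neg at hgt
      have hmem : (i, j) ∈ (cells d lam).filter (fun c => i + 1 ≤ T c.1 c.2) :=
        Finset.mem_filter.mpr ⟨(mem_cells hlam).mpr hcell, by show i + 1 ≤ T i j; omega⟩
      rw [← key (i + 1)] at hmem
      have h5 : i + 1 ≤ i := (Finset.mem_filter.mp hmem).2
      omega
    simp only [if_pos hcell]
    omega
  · simp only [if_neg hcell]
    exact hT4 i j hcell

end Tableau

lemma schur_diag {lam : ℕ → ℕ} (hlam : IsPartitionLe d lam) :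
    (MvPowerSeries.coeff (R := ℚ) (mOf d lam)) (schurFun d lam) = 1 := by
  classical
  set T0 : ℕ → ℕ → ℕ := fun i j => if j < lam i then i else 0 with hT0
  have hT0props : (∀ i j j', j ≤ j' → j' < lam i → T0 i j ≤ T0 i j') ∧
      (∀ i i' j, i < i' → j < lam i' → T0 i j < T0 i' j) ∧
      (∀ i j, j < lam i → T0 i j < d) ∧
      (∀ i j, ¬ j < lam i → T0 i j = 0) ∧
      (∀ v : Fin d, Nat.card {c : ℕ × ℕ // c.2 < lam c.1 ∧ T0 c.1 c.2 = (v : ℕ)}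
        = mOf d lam v) := by
    refine ⟨?_, ?_, ?_, ?_, ?_⟩
    · intro i j j' hjj' hj'
      have hj : j < lam i := by omega
      simp [hT0, if_pos hj, if_pos hj']
    · intro i i' j hii' hj'
      have hj : j < lam i := lt_of_lt_of_le hj' (hlam.1 (le_of_lt hii'))
      simp only [hT0, if_pos hj, if_pos hj']
      exact hii'
    · intro i j hj
      simp only [hT0, if_pos hj]
      by_contra hx
      push_neg at hx
      rw [hlam.2 i hx] at hj
      omega
    · intro i j hj
      simp [hT0, if_neg hj]
    · intro v
      have hiff : ∀ c : ℕ × ℕ, (c.2 < lam c.1 ∧ T0 c.1 c.2 = (v : ℕ))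
          ↔ (c.1 = (v : ℕ) ∧ c.2 < lam (v : ℕ)) := by
        intro c
        constructor
        · rintro ⟨h1, h2⟩
          rw [hT0] at h2
          simp only [if_pos h1] at h2
          exact ⟨h2, h2 ▸ h1⟩
        · rintro ⟨h1, h2⟩
          have h3 : c.2 < lam c.1 := h1 ▸ h2
          refine ⟨h3, ?_⟩
          show (if c.2 < lam c.1 then c.1 else 0) = (v : ℕ)
          rw [if_pos h3]
          exact h1
      rw [Nat.card_congr (Equiv.subtypeEquivRight hiff)]
      have e : {c : ℕ × ℕ // c.1 = (v : ℕ) ∧ c.2 < lam (v : ℕ)} ≃ Fin (lam (v : ℕ)) :=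
        { toFun := fun c => ⟨c.1.2, c.2.2⟩
          invFun := fun x => ⟨((v : ℕ), x.1), rfl, x.2⟩
          left_inv := by
            rintro ⟨⟨a, b⟩, h1, h2⟩
            simp only at h1
            subst h1
            rfl
          right_inv := fun x => rfl }
      rw [Nat.card_congr e, Nat.card_eq_fintype_card, Fintype.card_fin]
      simp
  rw [MvPowerSeries.coeff_apply, schurFun]
  haveI hne : Nonempty {T : ℕ → ℕ → ℕ //
      (∀ i j j', j ≤ j' → j' < lam i → T i j ≤ T i j') ∧
      (∀ i i' j, i < i' → j < lam i' → T i j < T i' j) ∧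
      (∀ i j, j < lam i → T i j < d) ∧
      (∀ i j, ¬ j < lam i → T i j = 0) ∧
      (∀ v : Fin d, Nat.card {c : ℕ × ℕ // c.2 < lam c.1 ∧ T c.1 c.2 = (v : ℕ)}
        = mOf d lam v)} := ⟨⟨T0, hT0props⟩⟩
  haveI hsub : Subsingleton {T : ℕ → ℕ → ℕ //
      (∀ i j j', j ≤ j' → j' < lam i → T i j ≤ T i j') ∧
      (∀ i i' j, i < i' → j < lam i' → T i j < T i' j) ∧
      (∀ i j, j < lam i → T i j < d) ∧
      (∀ i j, ¬ j < lam i → T i j = 0) ∧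
      (∀ v : Fin d, Nat.card {c : ℕ × ℕ // c.2 < lam c.1 ∧ T c.1 c.2 = (v : ℕ)}
        = mOf d lam v)} := by
    constructor
    rintro ⟨T, _, hT2, hT3, hT4, hcnt⟩ ⟨S, _, hS2, hS3, hS4, hscnt⟩
    have h1 := tableau_unique hlam hT2 hT3 hT4 (fun v => hcnt v)
    have h2 := tableau_unique hlam hS2 hS3 hS4 (fun v => hscnt v)
    exact Subtype.ext (h1.trans h2.symm)
  rw [Nat.card_unique]
  norm_num



lemma sum_weight (n : ℕ) (a : ℕ → ℕ) :
    (∑ k ∈ Finset.range n, ∑ i ∈ Finset.range (k + 1), a i) + ∑ i ∈ Finset.range n, i * a i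
      = n * ∑ i ∈ Finset.range n, a i := by
  induction n with
  | zero => simp
  | succ n ih =>
      rw [Finset.sum_range_succ (f := fun k => ∑ i ∈ Finset.range (k + 1), a i),
        Finset.sum_range_succ (f := fun i => i * a i), Finset.sum_range_succ (f := a),
        add_mul, one_mul, Nat.mul_add]
      linarith

lemma weight_lt {d : ℕ} {mu lam : ℕ → ℕ}
    (hmu : IsPartitionLe d mu) (hlam : IsPartitionLe d lam)
    (hdom : ∀ k, k ≤ d → ∑ v ∈ Finset.range k, lam v ≤ ∑ i ∈ Finset.range k, mu i)
    (htot : ∑ i ∈ Finset.range d, mu i = ∑ v ∈ Finset.range d, lam v)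
    (hne : mu ≠ lam) :
    ∑ i ∈ Finset.range d, i * mu i < ∑ i ∈ Finset.range d, i * lam i := by
  have hstrict : ∃ k ∈ Finset.range d,
      ∑ v ∈ Finset.range (k + 1), lam v < ∑ i ∈ Finset.range (k + 1), mu i := by
    by_contra hx
    push_neg at hx
    have heq : ∀ k, k < d → ∑ v ∈ Finset.range (k + 1), lam v
        = ∑ i ∈ Finset.range (k + 1), mu i := by
      intro k hk
      have h1 := hx k (Finset.mem_range.mpr hk)
      have h2 := hdom (k + 1) hk
      omega
    apply hne
    funext i
    by_cases hi : i < d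
    · induction i with
      | zero =>
          have := heq 0 hi
          simp only [zero_add, Finset.sum_range_one] at this
          omega
      | succ n ihn =>
          have h1 := heq n (by omega)
          have h2 := heq (n + 1) hi
          rw [Finset.sum_range_succ (f := lam), Finset.sum_range_succ (f := mu)] at h2
          omega
    · push_neg at hi
      rw [hmu.2 i hi, hlam.2 i hi]
  have hsum : ∑ k ∈ Finset.range d, ∑ v ∈ Finset.range (k + 1), lam v
      < ∑ k ∈ Finset.range d, ∑ i ∈ Finset.range (k + 1), mu i := by
    obtain ⟨k, hk, hks⟩ := hstrict
    exact Finset.sum_lt_sum (fun i hi => hdom (i + 1) (Finset.mem_range.mp hi)) ⟨k, hk, hks⟩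
  have e1 := sum_weight d mu
  have e2 := sum_weight d lam
  rw [htot] at e1
  linarith


lemma key (d j : ℕ) (hd : 1 ≤ d) (c : (ℕ → ℕ) → ℚ)
    (hc : SchurExpansion d (gFun d j) c) :
    ∀ N : ℕ, ∀ lam : ℕ → ℕ, IsPartitionLe d lam →
      (∑ i ∈ Finset.range d, i * lam i) = N →
      (j < lam 0 ∨ ¬ Even (∑ i ∈ Finset.range d, lam i)) → c lam = 0 := by
  intro N
  induction N using Nat.strong_induction_on with
  | _ N ih =>
    intro lam hlam hN hbad
    have h0 : MvPowerSeries.coeff (R := ℚ) (mOf d lam) (gFun d j) = 0 := by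
      rcases hbad with h | h
      · exact gFun_coeff_eq_zero_of_large (m := mOf d lam) (v := ⟨0, hd⟩) (by simpa using h)
      · apply gFun_coeff_eq_zero_of_odd
        have hs : sdeg (mOf d lam) = ∑ i ∈ Finset.range d, lam i :=
          Fin.sum_univ_eq_sum_range (fun i => lam i) d
        rw [hs]
        exact h
    have hall : ∀ mu : ℕ → ℕ, mu ≠ lam →
        Set.indicator {x : ℕ → ℕ | IsPartitionLe d x}
          (fun mu => c mu * MvPowerSeries.coeff (R := ℚ) (mOf d lam) (schurFun d mu)) mu = 0 := by
      intro mu hmune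
      by_cases hS : mu ∈ {x : ℕ → ℕ | IsPartitionLe d x}
      · rw [Set.indicator_of_mem hS]
        by_cases hco : MvPowerSeries.coeff (R := ℚ) (mOf d lam) (schurFun d mu) = 0
        · rw [hco, mul_zero]
        · obtain ⟨hdom, htot⟩ := dominance hS hlam hco
          have hw : ∑ i ∈ Finset.range d, i * mu i < ∑ i ∈ Finset.range d, i * lam i :=
            weight_lt hS hlam hdom htot hmune
          have hbadmu : j < mu 0 ∨ ¬ Even (∑ i ∈ Finset.range d, mu i) := by
            rcases hbad with h | h
            · left
              have h1 := hdom 1 hd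
              simp only [Finset.sum_range_one] at h1
              omega
            · right
              rw [htot]
              exact h
          rw [ih _ (by omega) mu hS rfl hbadmu, zero_mul]
      · exact Set.indicator_of_notMem hS _
    have h2 : (0 : ℚ) = c lam * MvPowerSeries.coeff (R := ℚ) (mOf d lam) (schurFun d lam) := by
      rw [← h0, hc (mOf d lam), finsum_mem_def, finsum_eq_single _ lam hall,
        Set.indicator_of_mem (show lam ∈ {x : ℕ → ℕ | IsPartitionLe d x} from hlam)]
    rw [schur_diag hlam, mul_one] at h2
    exact h2.symm

end SchurAux

/-- If `((1/2)∏(1-t_i) + (1/2)∏(1+t_i))^j = ∑_ρ m_ρ S_ρ(t_1,…,t_d)` and `m_ρ ≠ 0`, then `ρ`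
has at most `j` columns (`ρ_1 ≤ j`) and `|ρ|` is even. -/
theorem schur_support_of_pow_half_prod
    (d j : ℕ) (hd : 1 ≤ d) (hj : 1 ≤ j) (c : (ℕ → ℕ) → ℚ)
    (hc : SchurExpansion d
      ((MvPowerSeries.C (σ := Fin d) (R := ℚ) (1/2) * ∏ i : Fin d, (1 - MvPowerSeries.X i)
        + MvPowerSeries.C (σ := Fin d) (R := ℚ) (1/2) * ∏ i : Fin d, (1 + MvPowerSeries.X i)) ^ j) c)
    (lam : ℕ → ℕ) (hlam : IsPartitionLe d lam) (hne : c lam ≠ 0) :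
    lam 0 ≤ j ∧ Even (∑ i ∈ Finset.range d, lam i) := by
  have hc' : SchurExpansion d (SchurAux.gFun d j) c := hc
  by_contra hcon
  have hbad : j < lam 0 ∨ ¬ Even (∑ i ∈ Finset.range d, lam i) := by
    by_contra h
    push_neg at h
    exact hcon ⟨h.1, h.2⟩
  exact hne (SchurAux.key d j hd c hc' _ lam hlam rfl hbad)
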